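/- For every x ∈ D and every integer n ≥ 2, E_x[V(X_n)·1_{{σ ≥ n}}] ≤ (1 − β)·E_x[V(X_{n−1})·1_{{σ ≥ n−1}}]. -/

import Mathlib

open MeasureTheory ProbabilityTheory ENNReal

/-- The first hitting time `σ = inf {n ≥ 1 : ω n ∈ G}` of a set `G`, with value `⊤ = ∞`
if the trajectory never enters `G` at a positive time. -/
noncomputable def hittingTimeGe1 {D : Type*} (G : Set D) (ω : ℕ → D) : ℕ∞ :=
  ⨅ n ∈ {n : ℕ | 1 ≤ n ∧ ω n ∈ G}, (n : ℕ∞)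

lemma hittingTimeGe1_le_iff {D : Type*} (G : Set D) (ω : ℕ → D) (k : ℕ) :
    (k : ℕ∞) ≤ hittingTimeGe1 G ω ↔ ∀ i, 1 ≤ i → ω i ∈ G → k ≤ i := by
  simp [hittingTimeGe1, le_iInf_iff, Nat.cast_le, and_imp]

/-- Markov-property integral formula for nonnegative measurable functions of the next state. -/
lemma lintegral_markov_step {D : Type*} [MeasurableSpace D]
    (κ : ProbabilityTheory.Kernel D D) (μ : Measure (ℕ → D)) (m : ℕ)
    [ProbabilityTheory.IsSFiniteKernel κ]
    (B : Set (ℕ → D)) (hB : MeasurableSet B)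
    (hMar : ∀ A : Set D, MeasurableSet A →
      μ (B ∩ {ω | ω (m + 1) ∈ A}) = ∫⁻ ω in B, κ (ω m) A ∂μ)
    {g : D → ℝ≥0∞} (hg : Measurable g) :
    ∫⁻ ω in B, g (ω (m + 1)) ∂μ = ∫⁻ ω in B, ∫⁻ y, g y ∂(κ (ω m)) ∂μ := by
  refine Measurable.ennreal_induction
    (motive := fun g => ∫⁻ ω in B, g (ω (m + 1)) ∂μ = ∫⁻ ω in B, ∫⁻ y, g y ∂(κ (ω m)) ∂μ)
    (fun c s hs => ?_) (fun f g _ hf hg hPf hPg => ?_) (fun f hf hmono hP => ?_) hg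
  ·
    have h1 : ∀ ω : ℕ → D, s.indicator (fun _ => c) (ω (m + 1))
        = ((fun ω : ℕ → D => ω (m + 1)) ⁻¹' s).indicator (fun _ => c) ω := by
      intro ω; rfl
    have hps : MeasurableSet ((fun ω : ℕ → D => ω (m + 1)) ⁻¹' s) :=
      hs.preimage (measurable_pi_apply _)
    calc ∫⁻ ω in B, s.indicator (fun _ => c) (ω (m + 1)) ∂μ
        = ∫⁻ ω in B, ((fun ω : ℕ → D => ω (m + 1)) ⁻¹' s).indicator (fun _ => c) ω ∂μ := by
          simp_rw [h1]
      _ = c * (μ.restrict B) ((fun ω : ℕ → D => ω (m + 1)) ⁻¹' s) := by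
          rw [lintegral_indicator hps]; simp
      _ = c * μ (B ∩ {ω | ω (m + 1) ∈ s}) := by
          rw [Measure.restrict_apply hps, Set.inter_comm]; rfl
      _ = c * ∫⁻ ω in B, κ (ω m) s ∂μ := by rw [hMar s hs]
      _ = ∫⁻ ω in B, c * κ (ω m) s ∂μ := by
          rw [lintegral_const_mul]
          exact (Kernel.measurable_coe κ hs).comp (measurable_pi_apply m)
      _ = ∫⁻ ω in B, ∫⁻ y, s.indicator (fun _ => c) y ∂(κ (ω m)) ∂μ := by
          simp_rw [lintegral_indicator_const hs]
  · have hfc : Measurable fun ω : ℕ → D => f (ω (m + 1)) :=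
      hf.comp (measurable_pi_apply _)
    have hfint : Measurable fun ω : ℕ → D => ∫⁻ y, f y ∂(κ (ω m)) :=
      (Measurable.lintegral_kernel (κ := κ) hf).comp (measurable_pi_apply m)
    calc ∫⁻ ω in B, (f + g) (ω (m + 1)) ∂μ
        = ∫⁻ ω in B, f (ω (m + 1)) + g (ω (m + 1)) ∂μ := rfl
      _ = (∫⁻ ω in B, f (ω (m + 1)) ∂μ) + ∫⁻ ω in B, g (ω (m + 1)) ∂μ :=
          lintegral_add_left hfc _
      _ = (∫⁻ ω in B, ∫⁻ y, f y ∂(κ (ω m)) ∂μ) + ∫⁻ ω in B, ∫⁻ y, g y ∂(κ (ω m)) ∂μ := by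
          rw [hPf, hPg]
      _ = ∫⁻ ω in B, (∫⁻ y, f y ∂(κ (ω m))) + ∫⁻ y, g y ∂(κ (ω m)) ∂μ :=
          (lintegral_add_left hfint _).symm
      _ = ∫⁻ ω in B, ∫⁻ y, (f + g) y ∂(κ (ω m)) ∂μ := by
          congr 1; ext ω; rw [← lintegral_add_left hf]; rfl
  · have hfc : ∀ n, Measurable fun ω : ℕ → D => f n (ω (m + 1)) := fun n =>
      (hf n).comp (measurable_pi_apply _)
    have hfint : ∀ n, Measurable fun ω : ℕ → D => ∫⁻ y, f n y ∂(κ (ω m)) := fun n =>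
      (Measurable.lintegral_kernel (κ := κ) (hf n)).comp (measurable_pi_apply m)
    calc ∫⁻ ω in B, ⨆ n, f n (ω (m + 1)) ∂μ
        = ⨆ n, ∫⁻ ω in B, f n (ω (m + 1)) ∂μ := by
          refine lintegral_iSup hfc fun i j hij ω => hmono hij _
      _ = ⨆ n, ∫⁻ ω in B, ∫⁻ y, f n y ∂(κ (ω m)) ∂μ := by simp_rw [fun n => hP n]
      _ = ∫⁻ ω in B, ⨆ n, ∫⁻ y, f n y ∂(κ (ω m)) ∂μ :=
          (lintegral_iSup hfint fun i j hij ω => lintegral_mono fun y => hmono hij y).symm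
      _ = ∫⁻ ω in B, ∫⁻ y, ⨆ n, f n y ∂(κ (ω m)) ∂μ := by
          congr 1; ext ω
          exact (lintegral_iSup hf fun i j hij => hmono hij).symm

/-- For the Markov chain with kernel `κ` started at `x` (law `Px x` on path
space), under the drift condition `∫ V(y) κ(x, dy) ≤ (1 − β)·V(x) + b·1_G(x)`, one has
`E_x[V(X_n)·1_{σ ≥ n}] ≤ (1 − β)·E_x[V(X_{n−1})·1_{σ ≥ n−1}]` for every `n ≥ 2`. -/
theorem drift_hitting_decay
    {D : Type*} [MeasurableSpace D]
    (κ : ProbabilityTheory.Kernel D D) [ProbabilityTheory.IsMarkovKernel κ]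
    (Px : D → Measure (ℕ → D))
    (hprob : ∀ x, IsProbabilityMeasure (Px x))
    (hstart : ∀ x, Px x {ω | ω 0 = x} = 1)
    (hMarkov : ∀ (x : D) (n : ℕ) (B : Set (ℕ → D)),
      MeasurableSet[MeasurableSpace.comap (fun (ω : ℕ → D) (i : Fin (n + 1)) => ω i)
        inferInstance] B →
      ∀ A : Set D, MeasurableSet A →
        Px x (B ∩ {ω | ω (n + 1) ∈ A}) = ∫⁻ ω in B, κ (ω n) A ∂(Px x))
    (V : D → ℝ) (hV_meas : Measurable V) (hV_one : ∀ x, 1 ≤ V x)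
    (G : Set D) (hG : MeasurableSet G)
    (β b : ℝ) (hβ : 0 < β) (hβ1 : β < 1) (hb : 0 ≤ b)
    (hdrift : ∀ x, ∫⁻ y, ENNReal.ofReal (V y) ∂(κ x)
      ≤ ENNReal.ofReal ((1 - β) * V x + b * G.indicator 1 x)) :
    ∀ (x : D) (n : ℕ), 2 ≤ n →
      ∫⁻ ω in {ω | (n : ℕ∞) ≤ hittingTimeGe1 G ω}, ENNReal.ofReal (V (ω n)) ∂(Px x)
        ≤ ENNReal.ofReal (1 - β) *
          ∫⁻ ω in {ω | ((n - 1 : ℕ) : ℕ∞) ≤ hittingTimeGe1 G ω},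
            ENNReal.ofReal (V (ω (n - 1))) ∂(Px x) := by
  intro x n hn
  obtain ⟨m, rfl⟩ : ∃ m, n = m + 1 := ⟨n - 1, (Nat.succ_pred_eq_of_pos (by omega)).symm⟩
  have hm : 1 ≤ m := by omega
  set B : Set (ℕ → D) := {ω | ((m + 1 : ℕ) : ℕ∞) ≤ hittingTimeGe1 G ω} with hBdef
  have hBeq : B = {ω | ∀ i, 1 ≤ i → i ≤ m → ω i ∉ G} := by
    ext ω
    simp only [hBdef, Set.mem_setOf_eq, hittingTimeGe1_le_iff]
    constructor
    · intro h i h1 h2 hGi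
      have := h i h1 hGi; omega
    · intro h i h1 hGi
      by_contra hc
      exact h i h1 (by omega) hGi
  have hBmeas : MeasurableSet B := by
    rw [hBeq]
    have : {ω : ℕ → D | ∀ i, 1 ≤ i → i ≤ m → ω i ∉ G}
        = ⋂ i, {ω : ℕ → D | 1 ≤ i → i ≤ m → ω i ∉ G} := by
      ext ω; simp
    rw [this]
    refine MeasurableSet.iInter fun i => ?_
    by_cases h : 1 ≤ i ∧ i ≤ m
    · have : {ω : ℕ → D | 1 ≤ i → i ≤ m → ω i ∉ G}
          = (fun ω : ℕ → D => ω i) ⁻¹' Gᶜ := by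
        ext ω; simp [h.1, h.2]
      rw [this]
      exact hG.compl.preimage (measurable_pi_apply i)
    · have : {ω : ℕ → D | 1 ≤ i → i ≤ m → ω i ∉ G} = Set.univ := by
        ext ω; simp only [Set.mem_setOf_eq, Set.mem_univ, iff_true]
        intro h1 h2; exact absurd ⟨h1, h2⟩ h
      rw [this]; exact MeasurableSet.univ
  have hBcomap : MeasurableSet[MeasurableSpace.comap
      (fun (ω : ℕ → D) (i : Fin (m + 1)) => ω i) inferInstance] B := by
    refine ⟨{v : Fin (m + 1) → D | ∀ i : Fin (m + 1), 1 ≤ (i : ℕ) → v i ∉ G}, ?_, ?_⟩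
    · have : {v : Fin (m + 1) → D | ∀ i : Fin (m + 1), 1 ≤ (i : ℕ) → v i ∉ G}
          = ⋂ i : Fin (m + 1), {v : Fin (m + 1) → D | 1 ≤ (i : ℕ) → v i ∉ G} := by
        ext v; simp
      rw [this]
      refine MeasurableSet.iInter fun i => ?_
      by_cases h : 1 ≤ (i : ℕ)
      · have : {v : Fin (m + 1) → D | 1 ≤ (i : ℕ) → v i ∉ G}
            = (fun v : Fin (m + 1) → D => v i) ⁻¹' Gᶜ := by ext v; simp [h]
        rw [this]
        exact hG.compl.preimage (measurable_pi_apply i)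
      · have : {v : Fin (m + 1) → D | 1 ≤ (i : ℕ) → v i ∉ G} = Set.univ := by
          ext v; simp only [Set.mem_setOf_eq, Set.mem_univ, iff_true]
          intro h1; exact absurd h1 h
        rw [this]; exact MeasurableSet.univ
    · rw [hBeq]
      ext ω
      simp only [Set.mem_preimage, Set.mem_setOf_eq]
      constructor
      · intro h i h1 h2
        exact h ⟨i, by omega⟩ h1
      · intro h i h1
        exact h i h1 (by omega)
  have hVm : Measurable fun y : D => ENNReal.ofReal (V y) :=
    ENNReal.measurable_ofReal.comp hV_meas
  have hkey := lintegral_markov_step κ (Px x) m B hBmeas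
    (fun A hA => hMarkov x m B hBcomap A hA) hVm
  have hsub : B ⊆ {ω | ((m + 1 - 1 : ℕ) : ℕ∞) ≤ hittingTimeGe1 G ω} := by
    intro ω hω
    simp only [Set.mem_setOf_eq] at hω ⊢
    exact le_trans (by exact_mod_cast Nat.sub_le (m + 1) 1) hω
  have h1β : (0 : ℝ) ≤ 1 - β := by linarith
  calc ∫⁻ ω in B, ENNReal.ofReal (V (ω (m + 1))) ∂(Px x)
      = ∫⁻ ω in B, ∫⁻ y, ENNReal.ofReal (V y) ∂(κ (ω m)) ∂(Px x) := hkey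
    _ ≤ ∫⁻ ω in B, ENNReal.ofReal (1 - β) * ENNReal.ofReal (V (ω m)) ∂(Px x) := by
        refine setLIntegral_mono' hBmeas fun ω hω => ?_
        have hωG : ω m ∉ G := by
          rw [hBeq] at hω; exact hω m hm le_rfl
        have : ENNReal.ofReal ((1 - β) * V (ω m) + b * G.indicator 1 (ω m))
            = ENNReal.ofReal (1 - β) * ENNReal.ofReal (V (ω m)) := by
          rw [Set.indicator_of_notMem hωG, mul_zero, add_zero, ENNReal.ofReal_mul h1β]
        rw [← this]
        exact hdrift (ω m)
    _ = ENNReal.ofReal (1 - β) * ∫⁻ ω in B, ENNReal.ofReal (V (ω m)) ∂(Px x) :=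
        lintegral_const_mul _ (hVm.comp (measurable_pi_apply m))
    _ ≤ ENNReal.ofReal (1 - β) *
        ∫⁻ ω in {ω | ((m + 1 - 1 : ℕ) : ℕ∞) ≤ hittingTimeGe1 G ω},
          ENNReal.ofReal (V (ω (m + 1 - 1))) ∂(Px x) := by
        refine mul_le_mul_right ?_ _
        simp only [Nat.add_sub_cancel]
        exact lintegral_mono' (Measure.restrict_mono hsub le_rfl) le_rfl
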